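/- Let π be a permutation of K experts that, over the course of a dying-experts game, predicts using exactly l distinct experts e_{i_1}, …, e_{i_l} in this order. Then at least (K − l)! permutations of the K experts have identical behavior to π throughout the game; hence the fraction of permutations behaving like π is at least ∏_{r=0}^{l−1} 1/(K − r). -/

import Mathlib

/-- **Behavioral copies of a permutation.**  In a dying experts game (`alive`
is antitone and nonempty; `beh π t` is the first alive expert of `π` at round
`t`), if the prediction sequence of a permutation `π` uses exactly `l` distinct
experts, then at least `(K - l)!` permutations have identical behavior to `π`,
and hence the fraction of such permutations is at least
`∏_{r=0}^{l-1} 1/(K - r)`. -/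
theorem behavioral_copies (K T : ℕ) (hK : 0 < K)
    (alive : Fin T → Finset (Fin K))
    (hne : ∀ t, (alive t).Nonempty)
    (hmono : ∀ s t : Fin T, s ≤ t → alive t ⊆ alive s)
    (beh : Equiv.Perm (Fin K) → Fin T → Fin K)
    (hbeh : ∀ π t, beh π t ∈ alive t ∧
      ∀ e ∈ alive t, π.symm (beh π t) ≤ π.symm e)
    (π : Equiv.Perm (Fin K)) (l : ℕ)
    (hl : (((List.finRange T).map (beh π)).dedup).length = l) :
    (K - l).factorial
        ≤ (Finset.univ.filter
            (fun π' : Equiv.Perm (Fin K) => ∀ t, beh π' t = beh π t)).card ∧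
    (∏ r ∈ Finset.range l, (1 : ℝ) / ((K : ℝ) - r))
        ≤ ((Finset.univ.filter
            (fun π' : Equiv.Perm (Fin K) => ∀ t, beh π' t = beh π t)).card : ℝ)
          / (K.factorial : ℝ) := by
  classical
  subst hl
  set L : List (Fin K) := ((List.finRange T).map (beh π)).dedup with hLdef
  set l : ℕ := L.length with hldef
  have hnodup : L.Nodup := List.nodup_dedup _
  have hlK : l ≤ K := by
    simpa using hnodup.length_le_card
  -- membership
  have hmemL : ∀ t, beh π t ∈ L := by
    intro t
    rw [hLdef, List.mem_dedup]
    exact List.mem_map.2 ⟨t, List.mem_finRange t, rfl⟩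
  -- strict pairwise ordering of positions along L
  have hpw : L.Pairwise (fun x y => π.symm x < π.symm y) := by
    have h1 : (((List.finRange T).map (beh π))).Pairwise
        (fun x y => π.symm x ≤ π.symm y) := by
      refine List.Pairwise.map _ ?_ (List.pairwise_lt_finRange T)
      intro s t hst
      exact (hbeh π s).2 (beh π t) (hmono s t hst.le (hbeh π t).1)
    have h2 : L.Pairwise (fun x y => π.symm x ≤ π.symm y) :=
      h1.sublist (List.dedup_sublist _)
    have h3 := h2.and hnodup
    exact h3.imp (fun h => lt_of_le_of_ne h.1
      (fun he => h.2 (π.symm.injective he)))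
  have hget : ∀ a b : Fin L.length, a < b → π.symm (L.get a) < π.symm (L.get b) :=
    fun a b hab => List.pairwise_iff_get.1 hpw a b hab
  -- index of beh π t in L
  have hidx : ∀ t, ∃ j : Fin L.length, L.get j = beh π t := by
    intro t
    exact List.mem_iff_get.1 (hmemL t)
  -- the finset of used experts
  set s : Finset (Fin K) := L.toFinset with hsdef
  have hscard : s.card = l := List.toFinset_card_of_nodup hnodup
  have hccard : Fintype.card {x : Fin K // x ∉ s} = K - l := by
    rw [Fintype.card_subtype_compl]
    simp [hscard]
  -- eA : Fin l ≃ {x // x ∈ s}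
  have hbijA : Function.Bijective
      (fun j : Fin l => (⟨L.get j, List.mem_toFinset.2 (L.get_mem _)⟩ :
        {x : Fin K // x ∈ s})) := by
    rw [Fintype.bijective_iff_injective_and_card]
    constructor
    · intro a b hab
      have h2 := Subtype.ext_iff.1 hab
      exact hnodup.get_inj_iff.1 h2
    · simp [Fintype.card_coe, hscard]
  set eA : Fin l ≃ {x : Fin K // x ∈ s} := Equiv.ofBijective _ hbijA with heA
  have heAval : ∀ j : Fin l, (eA j : Fin K) = L.get j := fun j => rfl
  set eB : Fin (K - l) ≃ {x : Fin K // x ∉ s} :=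
    (Fintype.equivOfCardEq (by simp [hccard])) with heB
  have hadd : l + (K - l) = K := Nat.add_sub_cancel' hlK
  set d : Fin K ≃ Fin l ⊕ Fin (K - l) :=
    (finCongr hadd.symm).trans finSumFinEquiv.symm with hd
  set Φ : Equiv.Perm {x : Fin K // x ∉ s} → Equiv.Perm (Fin K) :=
    fun τ => d.trans ((Equiv.sumCongr eA (eB.trans τ)).trans
      (Equiv.sumCompl (fun x => x ∈ s))) with hΦ
  -- evaluation on small indices
  have hdinl : ∀ (j : Fin l) (h : (j : ℕ) < K), d ⟨j, h⟩ = Sum.inl j := by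
    intro j h
    have : (finCongr hadd.symm) ⟨(j : ℕ), h⟩ = Fin.castAdd (K - l) j := by
      ext; simp
    rw [hd, Equiv.trans_apply, this, finSumFinEquiv_symm_apply_castAdd]
  have hΦval : ∀ τ (j : Fin l) (h : (j : ℕ) < K),
      Φ τ ⟨j, h⟩ = L.get j := by
    intro τ j h
    rw [hΦ]
    simp only [Equiv.trans_apply, hdinl j h, Equiv.sumCongr_apply, Sum.map_inl,
      Equiv.sumCompl_apply_inl]
    rfl
  -- evaluation on complement
  have hΦcompl : ∀ τ (x : {x : Fin K // x ∉ s}),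
      Φ τ (d.symm (Sum.inr (eB.symm x))) = (τ x : Fin K) := by
    intro τ x
    rw [hΦ]
    simp
  -- injectivity of Φ
  have hΦinj : Function.Injective Φ := by
    intro τ τ' h
    apply Equiv.ext
    intro x
    apply Subtype.ext
    have h2 := DFunLike.congr_fun h (d.symm (Sum.inr (eB.symm x)))
    rw [hΦcompl τ x, hΦcompl τ' x] at h2
    exact h2
  -- behavior of Φ τ
  have hΦbeh : ∀ τ t, beh (Φ τ) t = beh π t := by
    intro τ t
    obtain ⟨jt, hjt⟩ := hidx t
    set π' := Φ τ with hπ'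
    have hjtK : (jt : ℕ) < K := lt_of_lt_of_le jt.isLt hlK
    have hsymm_jt : π'.symm (beh π t) = ⟨(jt : ℕ), hjtK⟩ := by
      rw [Equiv.symm_apply_eq]
      rw [hπ', hΦval τ jt hjtK]
      exact hjt.symm
    obtain ⟨hb_alive, hb_min⟩ := hbeh π' t
    have hle : π'.symm (beh π' t) ≤ ⟨(jt : ℕ), hjtK⟩ := by
      rw [← hsymm_jt]
      exact hb_min (beh π t) (hbeh π t).1
    have hltl : ((π'.symm (beh π' t)) : ℕ) < l :=
      lt_of_le_of_lt hle jt.isLt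
    have hbval : L.get ⟨(π'.symm (beh π' t) : ℕ), hltl⟩ = beh π' t := by
      rw [← hΦval τ ⟨_, hltl⟩ (lt_of_lt_of_le hltl hlK)]
      exact π'.apply_symm_apply _
    -- cannot be strictly smaller
    rcases lt_or_eq_of_le (Fin.le_def.1 hle) with hlt | heq
    · exfalso
      have hdead : L.get ⟨(π'.symm (beh π' t) : ℕ), hltl⟩ ∉ alive t := by
        intro hal
        have h5 := (hbeh π t).2 _ hal
        have h6 := hget ⟨_, hltl⟩ jt hlt
        rw [hjt] at h6
        exact absurd h5 (not_le.2 h6)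
      apply hdead
      rw [hbval]
      exact hb_alive
    · rw [← hbval, ← hjt]
      congr 1
      ext
      exact heq
  -- the first claim
  set F := Finset.univ.filter
    (fun π' : Equiv.Perm (Fin K) => ∀ t, beh π' t = beh π t) with hF
  have hcard1 : (K - l).factorial ≤ F.card := by
    have h1 : Fintype.card (Equiv.Perm {x : Fin K // x ∉ s}) = (K - l).factorial := by
      rw [Fintype.card_perm, hccard]
    rw [← h1]
    rw [← Finset.card_univ]
    apply Finset.card_le_card_of_injOn Φ
    · intro τ _
      rw [hF, Finset.mem_coe, Finset.mem_filter]
      exact ⟨Finset.mem_univ _, hΦbeh τ⟩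
    · exact hΦinj.injOn
  refine ⟨hcard1, ?_⟩
  -- second claim
  have hfac : (K - l).factorial * K.descFactorial l = K.factorial :=
    Nat.factorial_mul_descFactorial hlK
  have hprod : (∏ r ∈ Finset.range l, ((K : ℝ) - r)) =
      ((K.descFactorial l : ℕ) : ℝ) := by
    rw [Nat.descFactorial_eq_prod_range]
    push_cast
    refine Finset.prod_congr rfl ?_
    intro r hr
    have : r ≤ K := le_of_lt (lt_of_lt_of_le (Finset.mem_range.1 hr) hlK)
    rw [Nat.cast_sub this]
  have hdpos : (0 : ℝ) < ((K.descFactorial l : ℕ) : ℝ) := by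
    have h0 : 0 < K.descFactorial l := by
      rcases Nat.eq_zero_or_pos (K.descFactorial l) with h | h
      · exfalso
        rw [h, mul_zero] at hfac
        exact (Nat.factorial_pos K).ne' hfac.symm
      · exact h
    exact_mod_cast h0
  have hfacpos : (0 : ℝ) < (K.factorial : ℝ) := by
    exact_mod_cast K.factorial_pos
  have hstep : (∏ r ∈ Finset.range l, (1 : ℝ) / ((K : ℝ) - r)) =
      ((K - l).factorial : ℝ) / (K.factorial : ℝ) := by
    simp only [one_div]
    rw [Finset.prod_inv_distrib, hprod, eq_div_iff (ne_of_gt hfacpos),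
      inv_mul_eq_div, div_eq_iff (ne_of_gt hdpos)]
    exact_mod_cast hfac.symm
  rw [hstep]
  have hc : ((K - l).factorial : ℝ) ≤ (F.card : ℝ) := by exact_mod_cast hcard1
  gcongr
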